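/- Every complex root of the polynomial P1(X) = (X+c2)·(X+c3)·(X+c4)·(X+C2)·(X+C3)·(X+C4)·Q1(X)·Q2(X) has strictly negative real part if and only if D < d, where Q1(X) = (B·d+1)·X^2 + (B·(C0+A1+C1)·d − A0 + C0 + A1 + C1)·X + C1·(B·d·C0 − A0 + C0) and Q2(X) = (d·b1+1)^2·X^2 + (b1^2·(a1+c1+c0)·d^2 + 2·b1·(a1+c1+c0)·d + a1 + c1 − a0 + c0)·X + c1·(d^2·b1^2·c0 + 2·d·b1·c0 − a0 + c0). (P1 is, up to a positive scalar factor, the characteristic polynomial of the Jacobian of system (3) at the steady state Ẽ1, so this states that Ẽ1 is linearly asymptotically stable if and only if D < d.) -/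
import Mathlib


set_option maxHeartbeats 1000000

lemma quad_root_neg_re (a b c : ℝ) (ha : 0 < a) (hb : 0 < b) (hc : 0 < c)
    (z : ℂ) (h : (a:ℂ) * z^2 + (b:ℂ)*z + (c:ℂ) = 0) : z.re < 0 := by
  set x := z.re with hx
  set y := z.im with hy
  have hre : a*(x^2 - y^2) + b*x + c = 0 := by
    have := congrArg Complex.re h
    simp [Complex.mul_re, Complex.mul_im, pow_two, ← hx, ← hy] at this
    nlinarith [this]
  have him : y * (2*a*x + b) = 0 := by
    have := congrArg Complex.im h
    simp [Complex.mul_re, Complex.mul_im, pow_two, ← hx, ← hy] at this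
    nlinarith [this]
  rcases mul_eq_zero.mp him with h0 | h0
  · by_contra hge
    push_neg at hge
    rw [h0] at hre
    nlinarith [mul_nonneg (mul_nonneg ha.le hge) hge, mul_nonneg hb.le hge]
  · nlinarith

lemma quad_nonneg_root (a b c : ℝ) (ha : 0 < a) (hc : c ≤ 0) :
    ∃ x : ℝ, 0 ≤ x ∧ a*x^2 + b*x + c = 0 := by
  have hdisc : 0 ≤ b^2 - 4*a*c := by nlinarith
  obtain ⟨s, hs⟩ : ∃ s, s = Real.sqrt (b^2 - 4*a*c) := ⟨_, rfl⟩
  have hs2 : s^2 = b^2 - 4*a*c := by rw [hs]; exact Real.sq_sqrt hdisc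
  have hsb : |b| ≤ s := by
    rw [hs, ← Real.sqrt_sq_eq_abs]
    exact Real.sqrt_le_sqrt (by nlinarith)
  refine ⟨(-b + s)/(2*a), ?_, ?_⟩
  · have h1 : b ≤ |b| := le_abs_self b
    have h2 : 0 ≤ -b + s := by
      have h3 : b ≤ s := le_trans h1 hsb
      linarith
    exact div_nonneg h2 (by positivity)
  · have h2a : (2*a) ≠ 0 := by positivity
    field_simp
    nlinarith [hs2]


/-- `Ẽ1` is linearly asymptotically stable iff `D < d`: every complex root of the
characteristic polynomial `P1` of the Jacobian at `Ẽ1` has negative real part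
iff `D < d`. -/
theorem stmt6 (a0 a1 a2 a3 a4 c0 c1 c2 c3 c4 A0 A1 A2 A3 A4 C0 C1 C2 C3 C4 b1 b2 B d D : ℝ)
    (ha0 : 0 < a0) (ha1 : 0 < a1) (ha2 : 0 < a2) (ha3 : 0 < a3) (ha4 : 0 < a4)
    (hc0 : 0 < c0) (hc1 : 0 < c1) (hc2 : 0 < c2) (hc3 : 0 < c3) (hc4 : 0 < c4)
    (hA0 : 0 < A0) (hA1 : 0 < A1) (hA2 : 0 < A2) (hA3 : 0 < A3) (hA4 : 0 < A4)
    (hC0 : 0 < C0) (hC1 : 0 < C1) (hC2 : 0 < C2) (hC3 : 0 < C3) (hC4 : 0 < C4)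
    (hb1 : 0 < b1) (hb2 : 0 < b2) (hB : 0 < B)
    (hac : c0 < a0) (hAC : C0 < A0)
    (hd : d = (a0 - c0) / (b1 * c0)) (hD : D = (A0 - C0) / (B * C0)) :
    (∀ z : ℂ,
        (z + ((c2 : ℝ) : ℂ)) * (z + ((c3 : ℝ) : ℂ)) * (z + ((c4 : ℝ) : ℂ)) * (z + ((C2 : ℝ) : ℂ)) * (z + ((C3 : ℝ) : ℂ)) * (z + ((C4 : ℝ) : ℂ)) *
          (((B * d + 1 : ℝ) : ℂ) * z ^ 2 + ((B * (C0 + A1 + C1) * d - A0 + C0 + A1 + C1 : ℝ) : ℂ) * z + ((C1 * (B * d * C0 - A0 + C0) : ℝ) : ℂ)) *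
          ((((d * b1 + 1) ^ 2 : ℝ) : ℂ) * z ^ 2 + ((b1 ^ 2 * (a1 + c1 + c0) * d ^ 2 + 2 * b1 * (a1 + c1 + c0) * d + a1 + c1 - a0 + c0 : ℝ) : ℂ) * z + ((c1 * (d ^ 2 * b1 ^ 2 * c0 + 2 * d * b1 * c0 - a0 + c0) : ℝ) : ℂ)) = 0 → z.re < 0) ↔ D < d := by
  -- basic facts
  have hdbc : d * (b1 * c0) = a0 - c0 := by
    rw [hd]; field_simp
  have hDBC : D * (B * C0) = A0 - C0 := by
    rw [hD]; field_simp
  have hdpos : 0 < d := by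
    rw [hd]; exact div_pos (by linarith) (by positivity)
  have hDpos : 0 < D := by
    rw [hD]; exact div_pos (by linarith) (by positivity)
  constructor
  · -- forward: all roots negative → D < d
    intro h
    by_contra hdd
    push_neg at hdd  -- d ≤ D
    have hkey : B * d * C0 - A0 + C0 ≤ 0 := by
      nlinarith [mul_le_mul_of_nonneg_left hdd (le_of_lt (mul_pos hB hC0))]
    have hcle : C1 * (B * d * C0 - A0 + C0) ≤ 0 :=
      mul_nonpos_of_nonneg_of_nonpos hC1.le hkey
    obtain ⟨x, hx0, hxroot⟩ := quad_nonneg_root (B * d + 1)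
      (B * (C0 + A1 + C1) * d - A0 + C0 + A1 + C1) (C1 * (B * d * C0 - A0 + C0))
      (by positivity) hcle
    have hz := h (x : ℂ)
    have hzero : (((B * d + 1 : ℝ) : ℂ) * (x:ℂ) ^ 2 + ((B * (C0 + A1 + C1) * d - A0 + C0 + A1 + C1 : ℝ) : ℂ) * (x:ℂ) + ((C1 * (B * d * C0 - A0 + C0) : ℝ) : ℂ)) = 0 := by
      calc (((B * d + 1 : ℝ) : ℂ) * (x:ℂ) ^ 2 + ((B * (C0 + A1 + C1) * d - A0 + C0 + A1 + C1 : ℝ) : ℂ) * (x:ℂ) + ((C1 * (B * d * C0 - A0 + C0) : ℝ) : ℂ))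
          = (((B * d + 1) * x^2 + (B * (C0 + A1 + C1) * d - A0 + C0 + A1 + C1) * x + C1 * (B * d * C0 - A0 + C0) : ℝ) : ℂ) := by push_cast; ring
        _ = 0 := by rw [hxroot]; exact Complex.ofReal_zero
    have := hz (by rw [hzero, mul_zero, zero_mul])
    simp at this
    linarith
  · -- backward: D < d → all roots negative
    intro hDd z hz
    have h1 : 0 < B * d + 1 := by positivity
    have key : 0 < B * C0 * d - (A0 - C0) := by
      nlinarith [mul_lt_mul_of_pos_left hDd (mul_pos hB hC0)]
    have h2 : 0 < B * (C0 + A1 + C1) * d - A0 + C0 + A1 + C1 := by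
      nlinarith [mul_pos (mul_pos hB hA1) hdpos, mul_pos (mul_pos hB hC1) hdpos]
    have h3 : 0 < C1 * (B * d * C0 - A0 + C0) := by
      have key2 : 0 < B * d * C0 - A0 + C0 := by nlinarith
      exact mul_pos hC1 key2
    have h4 : 0 < (d * b1 + 1) ^ 2 := by positivity
    have keyq : d ^ 2 * b1 ^ 2 * c0 + 2 * d * b1 * c0 - a0 + c0 = (a0 - c0) * (d * b1 + 1) := by
      nlinarith [hdbc, sq_nonneg (d*b1)]
    have h5 : 0 < b1 ^ 2 * (a1 + c1 + c0) * d ^ 2 + 2 * b1 * (a1 + c1 + c0) * d + a1 + c1 - a0 + c0 := by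
      nlinarith [keyq, mul_pos (sub_pos.mpr hac) (by positivity : (0:ℝ) < d * b1 + 1), mul_pos ha1 (by positivity : (0:ℝ) < (d*b1+1)^2), mul_pos hc1 (by positivity : (0:ℝ) < (d*b1+1)^2), sq_nonneg (d*b1+1)]
    have h6 : 0 < c1 * (d ^ 2 * b1 ^ 2 * c0 + 2 * d * b1 * c0 - a0 + c0) := by
      rw [keyq]
      exact mul_pos hc1 (mul_pos (by linarith) (by positivity))
    -- split the product
    have := hz
    repeat rw [mul_eq_zero] at this
    rcases this with ((((((hf | hf) | hf) | hf) | hf) | hf) | hf) | hf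
    · have := congrArg Complex.re hf; simp at this; linarith
    · have := congrArg Complex.re hf; simp at this; linarith
    · have := congrArg Complex.re hf; simp at this; linarith
    · have := congrArg Complex.re hf; simp at this; linarith
    · have := congrArg Complex.re hf; simp at this; linarith
    · have := congrArg Complex.re hf; simp at this; linarith
    · exact quad_root_neg_re _ _ _ h1 h2 h3 z hf
    · exact quad_root_neg_re _ _ _ h4 h5 h6 z hf
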